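/- Let α > 1 and M > 0. With η_ε as in the logarithmic cutoff construction (η_ε(r) = (log(1/ε) − log log(1/r))/(log(1/ε) − log log(1/ε)) on (e^{−1/ε}, ε), 0 below, 1 above), one has ∫_{e^{−1/ε}}^{ε} [log^{1−α}(1/r) / (r² log²(1/r) log²(1/ε))] · log^α(e + 2M/(r log(1/r) log(1/ε))) · r dr ≤ C(α,M)/log(1/ε) for all sufficiently small ε > 0; in particular the left-hand side tends to 0 as ε → 0⁺. -/

import Mathlib

set_option maxHeartbeats 1000000

open MeasureTheory Set Real Filter

lemma aux_key (α M : ℝ) (hα : 1 < α) (hM : 0 < M) (ε : ℝ)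
    (hε0 : 0 < ε) (hεe : ε < Real.exp (-1)) :
    (∫ r in Set.Ioo (Real.exp (-1 / ε)) ε,
        (Real.log (1 / r)) ^ (1 - α) /
          (r ^ 2 * (Real.log (1 / r)) ^ 2 * (Real.log (1 / ε)) ^ 2) *
        (Real.log (Real.exp 1 +
          2 * M / (r * Real.log (1 / r) * Real.log (1 / ε)))) ^ α * r) ≤
      ((1 + Real.log (Real.exp 1 + 2 * M)) ^ α) / Real.log (1 / ε) := by
  set Λ : ℝ := Real.log (1 / ε) with hΛdef
  have hε1 : ε < 1 := hεe.trans (by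
    have := Real.exp_lt_one_iff.mpr (by norm_num : (-1:ℝ) < 0); linarith)
  have hΛ1 : 1 < Λ := by
    rw [hΛdef]
    have h1 : Real.exp 1 < 1 / ε := by
      rw [lt_div_iff₀ hε0]
      have h := mul_lt_mul_of_pos_left hεe (Real.exp_pos 1)
      have h2 : Real.exp 1 * Real.exp (-1) = 1 := by
        rw [← Real.exp_add]; norm_num
      linarith
    calc (1:ℝ) = Real.log (Real.exp 1) := (Real.log_exp 1).symm
    _ < Real.log (1 / ε) := Real.log_lt_log (Real.exp_pos 1) h1
  have hΛ0 : 0 < Λ := by linarith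
  set a : ℝ := Real.exp (-1 / ε) with hadef
  have ha0 : 0 < a := Real.exp_pos _
  have hΛlt : Λ < 1 / ε := by
    have h := Real.log_le_sub_one_of_pos (show (0:ℝ) < 1/ε by positivity)
    rw [← hΛdef] at h
    have : (0:ℝ) < 1/ε := by positivity
    linarith
  have hlogε : Real.log ε = -Λ := by
    rw [hΛdef, one_div, Real.log_inv]; ring
  have haε : a < ε := by
    rw [hadef]
    calc Real.exp (-1 / ε) < Real.exp (-Λ) := by
          apply Real.exp_lt_exp.mpr
          rw [neg_div]
          linarith
      _ = ε := by rw [← hlogε, Real.exp_log hε0]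
  set C₁ : ℝ := 1 + Real.log (Real.exp 1 + 2 * M) with hC₁def
  have hC₁1 : 1 < C₁ := by
    rw [hC₁def]
    have : 0 < Real.log (Real.exp 1 + 2 * M) := by
      apply Real.log_pos
      nlinarith [Real.exp_one_gt_d9]
    linarith
  have hC₁0 : 0 < C₁ := by linarith
  -- facts about r in the interval
  have hrfacts : ∀ r ∈ Set.Ioo a ε, 0 < r ∧ Λ < Real.log (1 / r) := by
    intro r hr
    have hr0 : 0 < r := ha0.trans hr.1
    refine ⟨hr0, ?_⟩
    rw [hΛdef]
    apply Real.log_lt_log (by positivity)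
    exact one_div_lt_one_div_of_lt hr0 hr.2
  -- dominating function
  set g : ℝ → ℝ := fun r => (C₁ ^ α / Λ ^ 2) * (r * Real.log (1 / r))⁻¹ with hgdef
  have hgcont : ContinuousOn (fun r : ℝ => (r * Real.log (1 / r))⁻¹) (Set.Icc a ε) := by
    apply ContinuousOn.inv₀
    · exact continuousOn_id.mul ((continuousOn_const.div continuousOn_id
        fun x hx => ne_of_gt (ha0.trans_le hx.1)).log
        fun x hx => one_div_ne_zero (ne_of_gt (ha0.trans_le hx.1)))
    · intro x hx
      have hx0 : 0 < x := ha0.trans_le hx.1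
      have hx1 : x < 1 := lt_of_le_of_lt hx.2 hε1
      have : 0 < Real.log (1 / x) := Real.log_pos (by rw [lt_div_iff₀ hx0]; linarith)
      positivity
  have hgint : IntegrableOn g (Set.Ioo a ε) := by
    apply IntegrableOn.mono_set _ Set.Ioo_subset_Icc_self
    exact ((hgcont.const_smul (C₁ ^ α / Λ ^ 2)).integrableOn_compact isCompact_Icc)
  -- pointwise bound
  have hptwise : ∀ r ∈ Set.Ioo a ε,
      (Real.log (1 / r)) ^ (1 - α) /
          (r ^ 2 * (Real.log (1 / r)) ^ 2 * Λ ^ 2) *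
        (Real.log (Real.exp 1 + 2 * M / (r * Real.log (1 / r) * Λ))) ^ α * r ≤ g r := by
    intro r hr
    obtain ⟨hr0, hLΛ⟩ := hrfacts r hr
    set L : ℝ := Real.log (1 / r) with hLdef
    have hL1 : 1 < L := hΛ1.trans hLΛ
    have hL0 : 0 < L := by linarith
    set X : ℝ := 2 * M / (r * L * Λ) with hXdef
    have hX0 : 0 < X := by rw [hXdef]; positivity
    have hXle : X ≤ 2 * M / r := by
      rw [hXdef]
      rw [div_le_div_iff₀ (by positivity) hr0]
      have hLΛ1 : 1 ≤ L * Λ := by nlinarith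
      nlinarith [mul_le_mul_of_nonneg_left hLΛ1 (by positivity : (0:ℝ) ≤ 2*M*r)]
    have hlog_le : Real.log (Real.exp 1 + X) ≤ C₁ * L := by
      have h1 : Real.exp 1 + X ≤ (Real.exp 1 + 2 * M) / r := by
        have : Real.exp 1 ≤ Real.exp 1 / r := by
          rw [le_div_iff₀ hr0]
          nlinarith [Real.exp_pos (1:ℝ), hr.2, hε1]
        have h2 : (Real.exp 1 + 2 * M) / r = Real.exp 1 / r + 2 * M / r := by ring
        linarith [hXle]
      have h2 : Real.log (Real.exp 1 + X) ≤ Real.log ((Real.exp 1 + 2 * M) / r) := by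
        apply Real.log_le_log (by positivity) h1
      have h3 : Real.log ((Real.exp 1 + 2 * M) / r) =
          Real.log (Real.exp 1 + 2 * M) + L := by
        rw [Real.log_div (by positivity) (ne_of_gt hr0), hLdef, one_div, Real.log_inv]
        ring
      have h4 : Real.log (Real.exp 1 + 2 * M) + L ≤ C₁ * L := by
        rw [hC₁def]
        have h5 : 0 ≤ Real.log (Real.exp 1 + 2 * M) := by
          apply Real.log_nonneg; nlinarith [Real.exp_one_gt_d9]
        nlinarith
      linarith
    have hlog0 : 0 ≤ Real.log (Real.exp 1 + X) := by
      apply Real.log_nonneg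
      nlinarith [Real.exp_one_gt_d9]
    have hrpow : (Real.log (Real.exp 1 + X)) ^ α ≤ C₁ ^ α * L ^ α := by
      rw [← Real.mul_rpow (le_of_lt hC₁0) (le_of_lt hL0)]
      exact Real.rpow_le_rpow hlog0 hlog_le (by linarith)
    calc L ^ (1 - α) / (r ^ 2 * L ^ 2 * Λ ^ 2) *
          (Real.log (Real.exp 1 + X)) ^ α * r
        ≤ L ^ (1 - α) / (r ^ 2 * L ^ 2 * Λ ^ 2) * (C₁ ^ α * L ^ α) * r := by
          apply mul_le_mul_of_nonneg_right _ (le_of_lt hr0)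
          apply mul_le_mul_of_nonneg_left hrpow
          positivity
      _ = g r := by
          rw [hgdef]
          have hLrw : L ^ (1 - α) = L / L ^ α := by
            rw [Real.rpow_sub hL0, Real.rpow_one]
          rw [hLrw]
          have hLα : (0:ℝ) < L ^ α := Real.rpow_pos_of_pos hL0 α
          rw [hLdef]
          field_simp
          have hne : Real.log (1 / r) ^ α ≠ 0 := ne_of_gt hLα
          rw [mul_comm (Real.log (1 / r)), ← div_div, div_self hne]
  -- integral comparison
  have hcomp : (∫ r in Set.Ioo a ε,
      (Real.log (1 / r)) ^ (1 - α) /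
          (r ^ 2 * (Real.log (1 / r)) ^ 2 * Λ ^ 2) *
        (Real.log (Real.exp 1 + 2 * M / (r * Real.log (1 / r) * Λ))) ^ α * r) ≤
      ∫ r in Set.Ioo a ε, g r := by
    apply MeasureTheory.integral_mono_of_nonneg
    · rw [Filter.EventuallyLE, ae_restrict_iff' measurableSet_Ioo]
      filter_upwards with r
      intro hr
      obtain ⟨hr0, hLΛ⟩ := hrfacts r hr
      have hL0 : 0 < Real.log (1 / r) := by linarith
      have hlog0 : 0 ≤ Real.log (Real.exp 1 +
          2 * M / (r * Real.log (1 / r) * Λ)) := by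
        apply Real.log_nonneg
        have : 0 < 2 * M / (r * Real.log (1 / r) * Λ) := by positivity
        nlinarith [Real.exp_one_gt_d9]
      have h1 : (0:ℝ) ≤ (Real.log (1 / r)) ^ (1 - α) := by positivity
      have h2 : (0:ℝ) ≤ (Real.log (Real.exp 1 +
          2 * M / (r * Real.log (1 / r) * Λ))) ^ α := Real.rpow_nonneg hlog0 α
      have h3 : (0:ℝ) ≤ r ^ 2 * (Real.log (1 / r)) ^ 2 * Λ ^ 2 := by positivity
      positivity
    · exact hgint
    · rw [Filter.EventuallyLE, ae_restrict_iff' measurableSet_Ioo]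
      filter_upwards with r
      exact hptwise r
  -- compute the integral of g
  have hFTC : (∫ r in Set.Ioo a ε, (r * Real.log (1 / r))⁻¹) = Λ - Real.log Λ := by
    rw [← MeasureTheory.integral_Ioc_eq_integral_Ioo,
      ← intervalIntegral.integral_of_le (le_of_lt haε)]
    have hderiv : ∀ x ∈ Set.uIcc a ε,
        HasDerivAt (fun y => -Real.log (-Real.log y)) ((x * Real.log (1 / x))⁻¹) x := by
      intro x hx
      rw [Set.uIcc_of_le (le_of_lt haε)] at hx
      have hx0 : 0 < x := ha0.trans_le hx.1
      have hx1 : x < 1 := lt_of_le_of_lt hx.2 hε1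
      have hlx : Real.log x < 0 := Real.log_neg hx0 hx1
      have h1 : HasDerivAt (fun y => -Real.log y) (-x⁻¹) x :=
        (Real.hasDerivAt_log (ne_of_gt hx0)).neg
      have h2 : HasDerivAt (fun y => Real.log (-Real.log y))
          ((-Real.log x)⁻¹ * (-x⁻¹)) x :=
        (Real.hasDerivAt_log (by linarith)).comp x h1
      have h3 : HasDerivAt (fun y => -Real.log (-Real.log y)) (-((-Real.log x)⁻¹ * (-x⁻¹))) x := h2.neg
      convert h3 using 1
      rw [one_div, Real.log_inv]
      field_simp
    have hcont : IntervalIntegrable (fun r => (r * Real.log (1 / r))⁻¹) volume a ε := by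
      apply ContinuousOn.intervalIntegrable
      rw [Set.uIcc_of_le (le_of_lt haε)]
      exact hgcont
    rw [intervalIntegral.integral_eq_sub_of_hasDerivAt hderiv hcont]
    have hlogε : Real.log ε = -Λ := by rw [hΛdef, one_div, Real.log_inv]; ring
    have hloga : Real.log a = -(1/ε) := by rw [hadef, Real.log_exp]; ring
    rw [hlogε, hloga]
    simp only [neg_neg]
    rw [hΛdef]
    ring
  have hgval : (∫ r in Set.Ioo a ε, g r) = (C₁ ^ α / Λ ^ 2) * (Λ - Real.log Λ) := by
    rw [hgdef]
    rw [MeasureTheory.integral_const_mul, hFTC]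
  have hfinal : (C₁ ^ α / Λ ^ 2) * (Λ - Real.log Λ) ≤ C₁ ^ α / Λ := by
    have h1 : Λ - Real.log Λ ≤ Λ := by
      have := Real.log_nonneg (le_of_lt hΛ1); linarith
    have h2 : (0:ℝ) < C₁ ^ α := Real.rpow_pos_of_pos hC₁0 α
    calc (C₁ ^ α / Λ ^ 2) * (Λ - Real.log Λ) ≤ (C₁ ^ α / Λ ^ 2) * Λ := by
          apply mul_le_mul_of_nonneg_left h1; positivity
      _ = C₁ ^ α / Λ := by field_simp
  calc _ ≤ ∫ r in Set.Ioo a ε, g r := hcomp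
    _ = (C₁ ^ α / Λ ^ 2) * (Λ - Real.log Λ) := hgval
    _ ≤ C₁ ^ α / Λ := hfinal

lemma aux_nonneg (α M : ℝ) (hM : 0 < M) (ε : ℝ)
    (hε0 : 0 < ε) (hε1 : ε < 1) :
    0 ≤ (∫ r in Set.Ioo (Real.exp (-1 / ε)) ε,
        (Real.log (1 / r)) ^ (1 - α) /
          (r ^ 2 * (Real.log (1 / r)) ^ 2 * (Real.log (1 / ε)) ^ 2) *
        (Real.log (Real.exp 1 +
          2 * M / (r * Real.log (1 / r) * Real.log (1 / ε)))) ^ α * r) := by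
  apply MeasureTheory.setIntegral_nonneg measurableSet_Ioo
  intro r hr
  have hr0 : 0 < r := (Real.exp_pos _).trans hr.1
  have hr1 : r < 1 := hr.2.trans hε1
  have hL0 : 0 < Real.log (1 / r) := Real.log_pos (by rw [lt_div_iff₀ hr0]; linarith)
  have hΛ0 : 0 ≤ Real.log (1 / ε) :=
    Real.log_nonneg (by rw [le_div_iff₀ hε0]; linarith)
  have hlog0 : 0 ≤ Real.log (Real.exp 1 +
      2 * M / (r * Real.log (1 / r) * Real.log (1 / ε))) := by
    apply Real.log_nonneg
    have h1 : 0 ≤ 2 * M / (r * Real.log (1 / r) * Real.log (1 / ε)) := by positivity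
    nlinarith [Real.exp_one_gt_d9]
  have h1 : (0:ℝ) ≤ (Real.log (1 / r)) ^ (1 - α) := by positivity
  have h2 : (0:ℝ) ≤ (Real.log (Real.exp 1 +
      2 * M / (r * Real.log (1 / r) * Real.log (1 / ε)))) ^ α :=
    Real.rpow_nonneg hlog0 α
  have h3 : (0:ℝ) ≤ r ^ 2 * (Real.log (1 / r)) ^ 2 * (Real.log (1 / ε)) ^ 2 := by positivity
  positivity

/-- The weighted Orlicz energy of (u−u(0))∇η_ε is O(1/log(1/ε)). -/
theorem stmt_19 (α M : ℝ) (hα : 1 < α) (hM : 0 < M) :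
    ∃ C : ℝ, 0 < C ∧ ∃ ε₀ : ℝ, 0 < ε₀ ∧
      (∀ ε : ℝ, ε ∈ Set.Ioo 0 ε₀ →
        (∫ r in Set.Ioo (Real.exp (-1 / ε)) ε,
          (Real.log (1 / r)) ^ (1 - α) /
            (r ^ 2 * (Real.log (1 / r)) ^ 2 * (Real.log (1 / ε)) ^ 2) *
          (Real.log (Real.exp 1 +
            2 * M / (r * Real.log (1 / r) * Real.log (1 / ε)))) ^ α * r) ≤
          C / Real.log (1 / ε)) ∧
      Tendsto (fun ε : ℝ =>
        ∫ r in Set.Ioo (Real.exp (-1 / ε)) ε,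
          (Real.log (1 / r)) ^ (1 - α) /
            (r ^ 2 * (Real.log (1 / r)) ^ 2 * (Real.log (1 / ε)) ^ 2) *
          (Real.log (Real.exp 1 +
            2 * M / (r * Real.log (1 / r) * Real.log (1 / ε)))) ^ α * r)
        (nhdsWithin 0 (Set.Ioi 0)) (nhds 0) := by
  set C : ℝ := (1 + Real.log (Real.exp 1 + 2 * M)) ^ α with hCdef
  have hC₁1 : (1:ℝ) < 1 + Real.log (Real.exp 1 + 2 * M) := by
    have : 0 < Real.log (Real.exp 1 + 2 * M) := by
      apply Real.log_pos; nlinarith [Real.exp_one_gt_d9]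
    linarith
  have hC0 : 0 < C := Real.rpow_pos_of_pos (by linarith) α
  refine ⟨C, hC0, Real.exp (-1), Real.exp_pos _, ?_, ?_⟩
  · intro ε hε
    exact aux_key α M hα hM ε hε.1 hε.2
  · have hmem : Set.Ioo (0:ℝ) (Real.exp (-1)) ∈ nhdsWithin (0:ℝ) (Set.Ioi 0) :=
      Ioo_mem_nhdsGT_of_mem ⟨le_refl 0, Real.exp_pos _⟩
    have he1 : Real.exp (-1:ℝ) < 1 := Real.exp_lt_one_iff.mpr (by norm_num)
    have hlogT : Tendsto (fun ε : ℝ => Real.log (1 / ε)) (nhdsWithin 0 (Set.Ioi 0)) atTop := by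
      have h := Real.tendsto_log_nhdsGT_zero
      have heq : (fun ε : ℝ => Real.log (1 / ε)) = fun ε => -Real.log ε := by
        funext ε; rw [one_div, Real.log_inv]
      rw [heq]
      exact tendsto_neg_atBot_atTop.comp h
    have hB : Tendsto (fun ε : ℝ => C / Real.log (1 / ε))
        (nhdsWithin 0 (Set.Ioi 0)) (nhds 0) :=
      Tendsto.div_atTop tendsto_const_nhds hlogT
    apply tendsto_of_tendsto_of_tendsto_of_le_of_le' tendsto_const_nhds hB
    · filter_upwards [hmem] with ε hε
      exact aux_nonneg α M hM ε hε.1 (hε.2.trans he1)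
    · filter_upwards [hmem] with ε hε
      exact aux_key α M hα hM ε hε.1 hε.2
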